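/- Let G be a finite group and M a finite additive abelian group on which G acts by additive automorphisms. Let M* be the group of characters of M, i.e., group homomorphisms from M to the multiplicative group ℂˣ, with the dual G-action defined by (g•χ)(m) = χ(g⁻¹•m). Then the number of G-orbits in M* equals the number of G-orbits in M. -/

import Mathlib

open MulAction

namespace CardOrbitsDual

variable (G M : Type*) [Group G] [AddCommGroup M] [DistribMulAction G M]

/-- The character group of `M`, written additively. -/
abbrev Dual := M →+ Additive ℂˣ

/-- The dual action of `G` on characters. -/
instance : MulAction G (Dual M) where
  smul g χ := χ.comp (DistribMulAction.toAddMonoidHom M g⁻¹)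
  one_smul χ := by
    ext m : 1
    show χ ((1 : G)⁻¹ • m) = χ m
    simp
  mul_smul g h χ := by
    ext m : 1
    show χ ((g * h)⁻¹ • m) = χ (h⁻¹ • g⁻¹ • m)
    rw [mul_inv_rev, mul_smul]

lemma dual_smul_apply (g : G) (χ : Dual M) (m : M) : (g • χ) m = χ (g⁻¹ • m) := rfl

/-- Duality: a finite abelian group has as many characters as elements. -/
lemma card_dual (Q : Type*) [AddCommGroup Q] [Finite Q] :
    Nonempty ((Q →+ Additive ℂˣ) ≃ Q) := by
  haveI : NeZero (Monoid.exponent (Multiplicative Q)) :=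
    ⟨Monoid.exponent_ne_zero_of_finite⟩
  haveI : NeZero ((Monoid.exponent (Multiplicative Q) : ℕ) : ℂ) :=
    ⟨Nat.cast_ne_zero.mpr (NeZero.ne _)⟩
  obtain ⟨e⟩ := CommGroup.monoidHom_mulEquiv_of_hasEnoughRootsOfUnity (Multiplicative Q) ℂ
  exact ⟨(AddMonoidHom.toMultiplicativeLeft.trans e.toEquiv).trans
    Multiplicative.toAdd⟩

lemma finite_dual (Q : Type*) [AddCommGroup Q] [Finite Q] : Finite (Q →+ Additive ℂˣ) := by
  obtain ⟨e⟩ := card_dual Q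
  exact Finite.of_equiv Q e.symm

variable [Finite M]

/-- The key fixed-point count: `g` fixes as many characters as elements. -/
lemma card_fixedBy_dual (g : G) :
    Nat.card (fixedBy (Dual M) g) = Nat.card (fixedBy M g) := by
  classical
  -- ψ m = g⁻¹ • m - m
  let ψ : M →+ M :=
    (DistribMulAction.toAddMonoidHom M (g⁻¹ : G)) - AddMonoidHom.id M
  have hψ : ∀ m : M, ψ m = g⁻¹ • m - m := fun m => rfl
  -- fixed characters are those vanishing on the range of ψ
  have e1 : fixedBy (Dual M) g ≃ {χ : Dual M // ∀ n ∈ ψ.range, χ n = 0} := by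
    refine Equiv.subtypeEquivRight fun χ => ?_
    constructor
    · rintro hχ n ⟨m, rfl⟩
      have := congrArg (fun f : Dual M => f m) hχ
      simp only [dual_smul_apply] at this
      rw [hψ, map_sub, this, sub_self]
    · intro h
      ext m : 1
      have := h (ψ m) ⟨m, rfl⟩
      rw [hψ, map_sub, sub_eq_zero] at this
      exact this
  -- characters vanishing on a subgroup ↔ characters of the quotient
  have e2 : {χ : Dual M // ∀ n ∈ ψ.range, χ n = 0} ≃ (M ⧸ ψ.range →+ Additive ℂˣ) := by
    refine
      { toFun := fun χ => QuotientAddGroup.lift ψ.range χ.1 χ.2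
        invFun := fun f =>
          ⟨f.comp (QuotientAddGroup.mk' ψ.range), fun n hn => by
            simp [AddMonoidHom.comp_apply, (QuotientAddGroup.eq_zero_iff n).mpr hn]⟩
        left_inv := fun χ => by
          ext m
          rfl
        right_inv := fun f =>
          AddMonoidHom.ext fun q => QuotientAddGroup.induction_on q fun _ => rfl }
  -- fixed elements of M are the kernel of ψ
  have e3 : fixedBy M g ≃ ψ.ker := by
    refine Equiv.subtypeEquivRight fun m => ?_
    simp only [AddMonoidHom.mem_ker, hψ, sub_eq_zero, mem_fixedBy, inv_smul_eq_iff]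
    exact eq_comm
  -- cardinality bookkeeping
  obtain ⟨ed⟩ := card_dual (M ⧸ ψ.range)
  have h1 : Nat.card (fixedBy (Dual M) g) = Nat.card (M ⧸ ψ.range) :=
    (Nat.card_congr e1).trans ((Nat.card_congr e2).trans (Nat.card_congr ed))
  have h2 : Nat.card (M ⧸ ψ.range) * Nat.card ψ.range = Nat.card M :=
    (AddSubgroup.card_eq_card_quotient_mul_card_addSubgroup ψ.range).symm
  have h3 : Nat.card (M ⧸ ψ.ker) = Nat.card ψ.range :=
    Nat.card_congr (QuotientAddGroup.quotientKerEquivRange ψ).toEquiv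
  have h4 : Nat.card (fixedBy M g) * Nat.card ψ.range = Nat.card M := by
    rw [Nat.card_congr e3, ← h3, mul_comm]
    exact (AddSubgroup.card_eq_card_quotient_mul_card_addSubgroup ψ.ker).symm
  have hpos : 0 < Nat.card ψ.range := Nat.card_pos
  rw [h1]
  exact Nat.eq_of_mul_eq_mul_right hpos (h2.trans h4.symm)

end CardOrbitsDual

open CardOrbitsDual

/-- **Duality Lemma.** Let `G` be a finite group and `M` a finite additive
abelian group on which `G` acts by additive automorphisms. Let `M*` be the group of
characters of `M` (group homomorphisms `M → ℂˣ`), with the dual `G`-action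
`(g • χ)(m) = χ(g⁻¹ • m)`. Then the number of `G`-orbits in `M*` equals the number of
`G`-orbits in `M`. -/
theorem card_orbits_dual_eq (G M : Type*) [Group G] [Fintype G]
    [AddCommGroup M] [Fintype M] [DistribMulAction G M] :
    Nat.card (Quot (fun χ₁ χ₂ : {χ : M → ℂˣ // ∀ x y : M, χ (x + y) = χ x * χ y} =>
        ∃ g : G, ∀ m : M, χ₂.1 m = χ₁.1 (g⁻¹ • m))) =
      Nat.card (Quot (fun m₁ m₂ : M => ∃ g : G, g • m₁ = m₂)) := by
  classical
  haveI : Finite (Dual M) := finite_dual M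
  haveI : Fintype (Dual M) := Fintype.ofFinite _
  haveI : ∀ a : G, Fintype (fixedBy (Dual M) a) := fun a => Fintype.ofFinite _
  haveI : ∀ a : G, Fintype (fixedBy M a) := fun a => Fintype.ofFinite _
  haveI : Fintype (Quotient (orbitRel G (Dual M))) := Fintype.ofFinite _
  haveI : Fintype (Quotient (orbitRel G M)) := Fintype.ofFinite _
  -- the subtype of characters is equivalent to `Dual M`
  let e : {χ : M → ℂˣ // ∀ x y : M, χ (x + y) = χ x * χ y} ≃ Dual M :=
    { toFun := fun χ => AddMonoidHom.mk' (fun m => Additive.ofMul (χ.1 m))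
        (fun a b => congrArg Additive.ofMul (χ.2 a b))
      invFun := fun f => ⟨fun m => (f m).toMul, fun x y => by
        show (f (x + y)).toMul = _
        rw [map_add]; rfl⟩
      left_inv := fun χ => rfl
      right_inv := fun f => rfl }
  -- transport the left quotient to the orbit quotient of `Dual M`
  have eL : Quot (fun χ₁ χ₂ : {χ : M → ℂˣ // ∀ x y : M, χ (x + y) = χ x * χ y} =>
        ∃ g : G, ∀ m : M, χ₂.1 m = χ₁.1 (g⁻¹ • m)) ≃ Quotient (orbitRel G (Dual M)) := by
    refine Quot.congr e fun χ₁ χ₂ => ?_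
    show _ ↔ e χ₁ ∈ orbit G (e χ₂)
    constructor
    · rintro ⟨g, hg⟩
      refine ⟨g⁻¹, ?_⟩
      ext m : 1
      show Additive.ofMul (χ₂.1 (g⁻¹⁻¹ • m)) = Additive.ofMul (χ₁.1 m)
      rw [inv_inv, hg (g • m), inv_smul_smul]
    · rintro ⟨g, hg⟩
      refine ⟨g⁻¹, fun m => ?_⟩
      have h2 : (e χ₂) m = (e χ₁) (g • m) := by
        have h3 : (e χ₂) (g⁻¹ • (g • m)) = (e χ₁) (g • m) :=
          congrArg (fun f : Dual M => f (g • m)) hg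
        rwa [inv_smul_smul] at h3
      show χ₂.1 m = χ₁.1 (g⁻¹⁻¹ • m)
      rw [inv_inv]
      exact congrArg Additive.toMul h2
  have eR : Quot (fun m₁ m₂ : M => ∃ g : G, g • m₁ = m₂) ≃ Quotient (orbitRel G M) := by
    refine Quot.congr (Equiv.refl M) fun m₁ m₂ => ?_
    show _ ↔ m₁ ∈ orbit G m₂
    constructor
    · rintro ⟨g, rfl⟩; exact ⟨g⁻¹, inv_smul_smul g m₁⟩
    · rintro ⟨g, rfl⟩; exact ⟨g⁻¹, inv_smul_smul g m₂⟩
  rw [Nat.card_congr eL, Nat.card_congr eR, Nat.card_eq_fintype_card, Nat.card_eq_fintype_card]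
  have hb1 := MulAction.sum_card_fixedBy_eq_card_orbits_mul_card_group G (Dual M)
  have hb2 := MulAction.sum_card_fixedBy_eq_card_orbits_mul_card_group G M
  have hsum : (∑ a : G, Fintype.card (fixedBy (Dual M) a))
      = ∑ a : G, Fintype.card (fixedBy M a) := by
    refine Finset.sum_congr rfl fun a _ => ?_
    have := card_fixedBy_dual G M a
    rwa [Nat.card_eq_fintype_card, Nat.card_eq_fintype_card] at this
  have := hb1.symm.trans (hsum.trans hb2)
  exact Nat.eq_of_mul_eq_mul_right Fintype.card_pos this
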